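/- Let G be a 2-connected graph with a Whitney separation (A,B), and let G′ be obtained from G by the Whitney switch with respect to (A,B). Then the identity map on the edges (interpreting each edge of G[A] and of G[B] as itself in G′) is a 2-isomorphism from G to G′, i.e., a set of edges forms a cycle in G if and only if it forms a cycle in G′. -/

import Mathlib

open SimpleGraph

/-- A graph is 2-connected: connected, at least 3 vertices, no cut vertex. -/
def TwoConnected {V : Type*} [Fintype V] (G : SimpleGraph V) : Prop :=
  G.Connected ∧ 3 ≤ Fintype.card V ∧ ∀ v : V, (G.induce ({v}ᶜ : Set V)).Connected

/-- `(A,B)` is a Whitney separation of `G`: `A ∪ B = V(G)`, `A∖B ≠ ∅ ≠ B∖A`,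
`|A ∩ B| = 2`, and no edge joins `A∖B` to `B∖A`. -/
def WhitneySep {V : Type*} (G : SimpleGraph V) (A B : Set V) : Prop :=
  A ∪ B = Set.univ ∧ (A \ B).Nonempty ∧ (B \ A).Nonempty ∧
    (∃ u v : V, u ≠ v ∧ A ∩ B = {u, v}) ∧
    ∀ x ∈ A \ B, ∀ y ∈ B \ A, ¬G.Adj x y

open Classical in
/-- The Whitney switch with respect to a Whitney separation with side `B` and
separator `{u,v}`: for every `w ∈ B ∖ {u,v}`, each edge `uw` is replaced by `vw`
and each edge `vw` by `uw`; all other edges are unchanged. -/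
noncomputable def wswitch {V : Type*} (G : SimpleGraph V) (B : Set V) (u v : V) :
    SimpleGraph V where
  Adj x y :=
    if x ∈ B \ {u, v} ∨ y ∈ B \ {u, v} then
      G.Adj (Equiv.swap u v x) (Equiv.swap u v y)
    else G.Adj x y
  symm := by
    constructor
    intro x y hxy
    by_cases hc : x ∈ B \ {u, v} ∨ y ∈ B \ {u, v}
    · rw [if_pos hc] at hxy
      rw [if_pos hc.symm]
      exact hxy.symm
    · rw [if_neg hc] at hxy
      rw [if_neg fun hcc => hc hcc.symm]
      exact hxy.symm
  loopless := by
    constructor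
    intro x hx
    by_cases hc : x ∈ B \ {u, v} ∨ x ∈ B \ {u, v}
    · rw [if_pos hc] at hx
      exact G.loopless.irrefl _ hx
    · rw [if_neg hc] at hx
      exact G.loopless.irrefl _ hx

/-- The edge set of a cycle of `G`. -/
def EdgeCycle {V : Type*} (G : SimpleGraph V) (s : Set (Sym2 V)) : Prop :=
  ∃ (v : V) (w : G.Walk v v), w.IsCycle ∧ s = {e | e ∈ w.edges}

open Classical in
/-- The edge map induced by the Whitney switch: an edge with an endpoint in
`B ∖ A` has its endpoints `u` and `v` swapped; every other edge (an edge of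
`G[A]`, or an edge of `G[B]` inside the separator) is kept as itself. -/
noncomputable def switchEdgeMap {V : Type*} (B A : Set V) (u v : V)
    (e : Sym2 V) : Sym2 V :=
  if ∃ x, x ∈ e ∧ x ∈ B \ A then Sym2.map (Equiv.swap u v) e else e

section Aux
open Classical

variable {V : Type*} {G : SimpleGraph V} {A B : Set V} {u v : V}

open Classical in
lemma wswitch_adj (G : SimpleGraph V) (B : Set V) (u v x y : V) :
    (wswitch G B u v).Adj x y ↔
      if x ∈ B \ {u, v} ∨ y ∈ B \ {u, v} then
        G.Adj (Equiv.swap u v x) (Equiv.swap u v y)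
      else G.Adj x y := Iff.rfl

lemma mem_sep_left (hAB : A ∩ B = {u, v}) : u ∈ A ∩ B := by
  rw [hAB]; exact Set.mem_insert _ _

lemma mem_sep_right (hAB : A ∩ B = {u, v}) : v ∈ A ∩ B := by
  rw [hAB]; exact Set.mem_insert_iff.2 (Or.inr rfl)

lemma swap_fix_of_mem_diff (hAB : A ∩ B = {u, v}) {x : V} (hx : x ∈ B \ A) :
    Equiv.swap u v x = x := by
  apply Equiv.swap_apply_of_ne_of_ne
  · rintro rfl; exact hx.2 (mem_sep_left hAB).1
  · rintro rfl; exact hx.2 (mem_sep_right hAB).1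

lemma swap_fix_of_mem_diffuv {x : V} (hx : x ∈ B \ ({u, v} : Set V)) :
    Equiv.swap u v x = x :=
  Equiv.swap_apply_of_ne_of_ne (fun h => hx.2 (by simp [h])) (fun h => hx.2 (by simp [h]))

lemma swap_mem_diffuv {x : V} :
    Equiv.swap u v x ∈ B \ ({u, v} : Set V) ↔ x ∈ B \ ({u, v} : Set V) := by
  constructor
  · intro h
    have h2 : x = Equiv.swap u v x := by
      conv_lhs => rw [← Equiv.swap_apply_self u v x]
      rw [swap_fix_of_mem_diffuv h]
    rw [h2]; exact h
  · intro h
    rwa [swap_fix_of_mem_diffuv h]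

lemma swap_mem_B (hAB : A ∩ B = {u, v}) {x : V} (hx : x ∈ B) :
    Equiv.swap u v x ∈ B := by
  by_cases h : x = u
  · subst h; rw [Equiv.swap_apply_left]; exact (mem_sep_right hAB).2
  by_cases h' : x = v
  · subst h'; rw [Equiv.swap_apply_right]; exact (mem_sep_left hAB).2
  · rw [Equiv.swap_apply_of_ne_of_ne h h']; exact hx

lemma adjA (hAB : A ∩ B = {u, v}) {x y : V} (hx : x ∈ A) (hy : y ∈ A) :
    (wswitch G B u v).Adj x y ↔ G.Adj x y := by
  rw [wswitch_adj, if_neg]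
  rintro (h | h)
  · have hm : x ∈ A ∩ B := ⟨hx, h.1⟩
    rw [hAB] at hm; exact h.2 hm
  · have hm : y ∈ A ∩ B := ⟨hy, h.1⟩
    rw [hAB] at hm; exact h.2 hm

lemma adjB (hAB : A ∩ B = {u, v}) {x y : V} (hx : x ∈ B) (hy : y ∈ B) (h : G.Adj x y) :
    (wswitch G B u v).Adj (Equiv.swap u v x) (Equiv.swap u v y) := by
  rw [wswitch_adj]
  by_cases hc : x ∈ B \ ({u, v} : Set V) ∨ y ∈ B \ ({u, v} : Set V)
  · rw [if_pos (hc.imp (swap_mem_diffuv (B := B)).2 (swap_mem_diffuv (B := B)).2)]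
    rwa [Equiv.swap_apply_self, Equiv.swap_apply_self]
  · rw [not_or] at hc
    rw [if_neg (by
      rw [not_or, swap_mem_diffuv (B := B), swap_mem_diffuv (B := B)]; exact hc)]
    have hx' : x = u ∨ x = v := by
      by_contra h'
      rw [not_or] at h'
      exact hc.1 ⟨hx, by simp [Set.mem_insert_iff, h'.1, h'.2]⟩
    have hy' : y = u ∨ y = v := by
      by_contra h'
      rw [not_or] at h'
      exact hc.2 ⟨hy, by simp [Set.mem_insert_iff, h'.1, h'.2]⟩
    rcases hx' with rfl | rfl <;> rcases hy' with rfl | rfl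
    · exact absurd rfl h.ne
    · rw [Equiv.swap_apply_left, Equiv.swap_apply_right]; exact h.symm
    · rw [Equiv.swap_apply_left, Equiv.swap_apply_right]; exact h.symm
    · exact absurd rfl h.ne


lemma edgesA (hAB : A ∩ B = {u, v}) {a b : V} (w : G.Walk a b)
    (hw : ∀ z ∈ w.support, z ∈ A) :
    ∀ e ∈ w.edges, e ∈ (wswitch G B u v).edgeSet := by
  intro e
  induction e using Sym2.ind with
  | _ x y =>
    intro he
    have hx := w.fst_mem_support_of_mem_edges he
    have hy := w.snd_mem_support_of_mem_edges he
    rw [mem_edgeSet, adjA hAB (hw _ hx) (hw _ hy)]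
    exact w.edges_subset_edgeSet he

lemma edgesB (hAB : A ∩ B = {u, v}) {a b : V} (w : G.Walk a b)
    (hw : ∀ z ∈ w.support, z ∈ B) :
    ∀ e ∈ w.edges, e ∈ ((wswitch G B u v).comap (Equiv.swap u v : V → V)).edgeSet := by
  intro e
  induction e using Sym2.ind with
  | _ x y =>
    intro he
    have hx := w.fst_mem_support_of_mem_edges he
    have hy := w.snd_mem_support_of_mem_edges he
    have := w.edges_subset_edgeSet he
    rw [mem_edgeSet] at this ⊢
    exact adjB hAB (hw _ hx) (hw _ hy) this

/-- the pullback homomorphism along an equivalence -/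
def comapHom {W : Type*} (e : V → W) (H : SimpleGraph W) : H.comap e →g H :=
  ⟨e, fun h => h⟩

noncomputable def mapB (hAB : A ∩ B = {u, v}) {a b : V} (w : G.Walk a b)
    (hw : ∀ z ∈ w.support, z ∈ B) :
    (wswitch G B u v).Walk (Equiv.swap u v a) (Equiv.swap u v b) :=
  (w.transfer ((wswitch G B u v).comap (Equiv.swap u v : V → V)) (edgesB hAB w hw)).map
    (comapHom (Equiv.swap u v : V → V) (wswitch G B u v))

lemma mapB_support (hAB : A ∩ B = {u, v}) {a b : V} (w : G.Walk a b)
    (hw : ∀ z ∈ w.support, z ∈ B) :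
    (mapB hAB w hw).support = w.support.map (Equiv.swap u v) := by
  show (Walk.map (comapHom (Equiv.swap u v : V → V) (wswitch G B u v))
    (w.transfer _ (edgesB hAB w hw))).support = _
  rw [Walk.support_map, Walk.support_transfer]
  rfl

lemma mapB_edges (hAB : A ∩ B = {u, v}) {a b : V} (w : G.Walk a b)
    (hw : ∀ z ∈ w.support, z ∈ B) :
    (mapB hAB w hw).edges = w.edges.map (Sym2.map (Equiv.swap u v)) := by
  show (Walk.map (comapHom (Equiv.swap u v : V → V) (wswitch G B u v))
    (w.transfer _ (edgesB hAB w hw))).edges = _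
  rw [Walk.edges_map, Walk.edges_transfer]
  rfl

lemma mapB_length (hAB : A ∩ B = {u, v}) {a b : V} (w : G.Walk a b)
    (hw : ∀ z ∈ w.support, z ∈ B) :
    (mapB hAB w hw).length = w.length := by
  show (Walk.map (comapHom (Equiv.swap u v : V → V) (wswitch G B u v))
    (w.transfer _ (edgesB hAB w hw))).length = _
  rw [Walk.length_map, Walk.length_transfer]

lemma comapHom_injective {W : Type*} (e : V ≃ W) (H : SimpleGraph W) :
    Function.Injective (comapHom (e : V → W) H) := e.injective

lemma mapB_isCycle (hAB : A ∩ B = {u, v}) {a : V} (w : G.Walk a a)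
    (hw : ∀ z ∈ w.support, z ∈ B) (hc : w.IsCycle) :
    (mapB hAB w hw).IsCycle :=
  (Walk.map_isCycle_iff_of_injective (comapHom_injective (Equiv.swap u v) _)).2
    (hc.transfer _)

lemma mapB_isPath (hAB : A ∩ B = {u, v}) {a b : V} (w : G.Walk a b)
    (hw : ∀ z ∈ w.support, z ∈ B) (hp : w.IsPath) :
    (mapB hAB w hw).IsPath :=
  Walk.map_isPath_of_injective (comapHom_injective (Equiv.swap u v) _) (hp.transfer _)

lemma switchEdgeMap_eq_self {x y : V} (hx : x ∈ A) (hy : y ∈ A) :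
    switchEdgeMap B A u v s(x, y) = s(x, y) := by
  rw [switchEdgeMap, if_neg]
  rintro ⟨z, hz, hzBA⟩
  rw [Sym2.mem_iff] at hz
  rcases hz with rfl | rfl
  exacts [hzBA.2 hx, hzBA.2 hy]

lemma switchEdgeMap_eq_map (hU : A ∪ B = Set.univ) (hAB : A ∩ B = {u, v})
    {x y : V} (hx : x ∈ B) (hy : y ∈ B) (hxy : x ≠ y) :
    switchEdgeMap B A u v s(x, y) = Sym2.map (Equiv.swap u v) s(x, y) := by
  rw [switchEdgeMap]
  split_ifs with h
  · rfl
  · push_neg at h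
    have hx' : x ∈ A := by
      by_contra h'
      exact (h x (Sym2.mem_iff.2 (Or.inl rfl))) ⟨hx, h'⟩
    have hy' : y ∈ A := by
      by_contra h'
      exact (h y (Sym2.mem_iff.2 (Or.inr rfl))) ⟨hy, h'⟩
    have hx2 : x = u ∨ x = v := by
      have : x ∈ A ∩ B := ⟨hx', hx⟩
      rw [hAB] at this; simpa [Set.mem_insert_iff] using this
    have hy2 : y = u ∨ y = v := by
      have : y ∈ A ∩ B := ⟨hy', hy⟩
      rw [hAB] at this; simpa [Set.mem_insert_iff] using this
    rcases hx2 with rfl | rfl <;> rcases hy2 with rfl | rfl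
    · exact absurd rfl hxy
    · rw [Sym2.map_pair_eq, Equiv.swap_apply_left, Equiv.swap_apply_right, Sym2.eq_swap]
    · rw [Sym2.map_pair_eq, Equiv.swap_apply_left, Equiv.swap_apply_right, Sym2.eq_swap]
    · exact absurd rfl hxy

lemma switchEdgeMap_invol (hAB : A ∩ B = {u, v}) (e : Sym2 V) :
    switchEdgeMap B A u v (switchEdgeMap B A u v e) = e := by
  have hcomp : (Equiv.swap u v : V → V) ∘ (Equiv.swap u v : V → V) = id := by
    funext z; simp
  by_cases h : ∃ x, x ∈ e ∧ x ∈ B \ A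
  · have h1 : switchEdgeMap B A u v e = Sym2.map (Equiv.swap u v) e := by
      rw [switchEdgeMap, if_pos h]
    rw [h1]
    obtain ⟨x, hx, hxBA⟩ := h
    have hcond : ∃ z, z ∈ Sym2.map (Equiv.swap u v) e ∧ z ∈ B \ A :=
      ⟨x, Sym2.mem_map.2 ⟨x, hx, swap_fix_of_mem_diff hAB hxBA⟩, hxBA⟩
    rw [switchEdgeMap, if_pos hcond, Sym2.map_map, hcomp, Sym2.map_id, id]
  · have h1 : switchEdgeMap B A u v e = e := by rw [switchEdgeMap, if_neg h]
    rw [h1, h1]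

lemma switchEdgeMap_mem (hAB : A ∩ B = {u, v}) {e : Sym2 V} (he : e ∈ G.edgeSet) :
    switchEdgeMap B A u v e ∈ (wswitch G B u v).edgeSet := by
  induction e using Sym2.ind with
  | _ x y =>
    rw [mem_edgeSet] at he
    by_cases h : ∃ z, z ∈ s(x, y) ∧ z ∈ B \ A
    · rw [switchEdgeMap, if_pos h, Sym2.map_pair_eq, mem_edgeSet, wswitch_adj, if_pos,
        Equiv.swap_apply_self, Equiv.swap_apply_self]
      · exact he
      · obtain ⟨z, hz, hzBA⟩ := h
        have hz' : z ∉ ({u, v} : Set V) := by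
          rintro (rfl | rfl)
          exacts [hzBA.2 (mem_sep_left hAB).1, hzBA.2 (mem_sep_right hAB).1]
        rw [Sym2.mem_iff] at hz
        rcases hz with rfl | rfl
        · left; rw [swap_fix_of_mem_diff hAB hzBA]; exact ⟨hzBA.1, hz'⟩
        · right; rw [swap_fix_of_mem_diff hAB hzBA]; exact ⟨hzBA.1, hz'⟩
    · rw [switchEdgeMap, if_neg h, mem_edgeSet, wswitch_adj, if_neg]
      · exact he
      rintro (hc | hc)
      · have hzA : x ∉ A := by
          intro hxA
          have : x ∈ A ∩ B := ⟨hxA, hc.1⟩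
          rw [hAB] at this
          exact hc.2 this
        exact h ⟨x, Sym2.mem_iff.2 (Or.inl rfl), ⟨hc.1, hzA⟩⟩
      · have hzA : y ∉ A := by
          intro hyA
          have : y ∈ A ∩ B := ⟨hyA, hc.1⟩
          rw [hAB] at this
          exact hc.2 this
        exact h ⟨y, Sym2.mem_iff.2 (Or.inr rfl), ⟨hc.1, hzA⟩⟩

lemma wswitch_invol : wswitch (wswitch G B u v) B u v = G := by
  ext x y
  rw [wswitch_adj]
  split_ifs with h
  · rw [wswitch_adj,
      if_pos (h.imp (swap_mem_diffuv (B := B)).2 (swap_mem_diffuv (B := B)).2),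
      Equiv.swap_apply_self, Equiv.swap_apply_self]
  · rw [wswitch_adj, if_neg h]

lemma wswitch_noedge (hAB : A ∩ B = {u, v})
    (hE : ∀ x ∈ A \ B, ∀ y ∈ B \ A, ¬G.Adj x y) :
    ∀ x ∈ A \ B, ∀ y ∈ B \ A, ¬(wswitch G B u v).Adj x y := by
  intro x hx y hy
  have hyuv : y ∉ ({u, v} : Set V) := by
    rintro (rfl | rfl)
    exacts [hy.2 (mem_sep_left hAB).1, hy.2 (mem_sep_right hAB).1]
  rw [wswitch_adj, if_pos (Or.inr ⟨hy.1, hyuv⟩)]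
  rw [Equiv.swap_apply_of_ne_of_ne (fun h => hx.2 (by rw [h]; exact (mem_sep_left hAB).2))
      (fun h => hx.2 (by rw [h]; exact (mem_sep_right hAB).2)),
    swap_fix_of_mem_diff hAB hy]
  exact hE x hx y hy


lemma isPath_loop_eq_nil {x : V} (w : G.Walk x x) (hw : w.IsPath) : w = Walk.nil := by
  cases w with
  | nil => rfl
  | cons h q => exact absurd q.end_mem_support ((Walk.cons_isPath_iff _ _).1 hw).2

lemma length_eq_one_of_mem_edges {H : SimpleGraph V} {a b : V} (p : H.Walk a b)
    (hp : p.IsPath) (he : s(a, b) ∈ p.edges) : p.length = 1 := by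
  cases p with
  | nil => simp at he
  | @cons _ c _ h q =>
    rw [Walk.edges_cons, List.mem_cons] at he
    rcases he with he | he
    · rw [Sym2.eq_iff] at he
      rcases he with ⟨-, hbc⟩ | ⟨hac, hba⟩
      · subst hbc
        have hq : q = Walk.nil := isPath_loop_eq_nil q ((Walk.cons_isPath_iff _ _).1 hp).1
        subst hq
        rfl
      · rw [← hac] at h
        exact absurd rfl h.ne
    · exact absurd (q.fst_mem_support_of_mem_edges he) ((Walk.cons_isPath_iff _ _).1 hp).2

lemma glue {H : SimpleGraph V} {a b : V} (hab : a ≠ b) (p : H.Walk a b) (q : H.Walk b a)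
    (hp : p.IsPath) (hq : q.IsPath) (hlen : 3 ≤ p.length + q.length)
    (hint : ∀ z ∈ p.support, z ∈ q.support → z = a ∨ z = b) :
    (p.append q).IsCycle := by
  rw [Walk.isCycle_def]
  have hpn : p.support = a :: p.support.tail := p.support_eq_cons
  have hqn : q.support = b :: q.support.tail := q.support_eq_cons
  have hpnd : p.support.Nodup := hp.support_nodup
  have hqnd : q.support.Nodup := hq.support_nodup
  have hanp : a ∉ p.support.tail := by
    rw [hpn, List.nodup_cons] at hpnd; exact hpnd.1
  have hbnq : b ∉ q.support.tail := by
    rw [hqn, List.nodup_cons] at hqnd; exact hqnd.1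
  refine ⟨?_, ?_, ?_⟩
  · rw [Walk.isTrail_def, Walk.edges_append, List.nodup_append']
    refine ⟨hp.isTrail.edges_nodup, hq.isTrail.edges_nodup, ?_⟩
    intro e hep heq
    revert hep heq
    induction e using Sym2.ind with
    | _ x y =>
      intro hep heq
      have hxp := p.fst_mem_support_of_mem_edges hep
      have hyp := p.snd_mem_support_of_mem_edges hep
      have hxq := q.fst_mem_support_of_mem_edges heq
      have hyq := q.snd_mem_support_of_mem_edges heq
      have hxy : x ≠ y := by
        have := p.edges_subset_edgeSet hep
        rw [mem_edgeSet] at this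
        exact this.ne
      have hx := hint x hxp hxq
      have hy := hint y hyp hyq
      have hpe : s(a, b) ∈ p.edges := by
        rcases hx with rfl | rfl <;> rcases hy with rfl | rfl
        · exact absurd rfl hxy
        · exact hep
        · rw [Sym2.eq_swap]; exact hep
        · exact absurd rfl hxy
      have hqe : s(b, a) ∈ q.edges := by
        rcases hx with rfl | rfl <;> rcases hy with rfl | rfl
        · exact absurd rfl hxy
        · rw [Sym2.eq_swap]; exact heq
        · exact heq
        · exact absurd rfl hxy
      have h1 := length_eq_one_of_mem_edges p hp hpe
      have h2 := length_eq_one_of_mem_edges q hq hqe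
      omega
  · intro hnil
    have h0 : (p.append q).length = 0 := by rw [hnil]; rfl
    rw [Walk.length_append] at h0
    omega
  · have hsup : (p.append q).support = p.support ++ q.support.tail :=
      Walk.support_append p q
    rw [hsup, hpn, List.cons_append, List.tail_cons, List.nodup_append']
    have h1 : p.support.tail.Nodup := by
      rw [hpn, List.nodup_cons] at hpnd; exact hpnd.2
    have h2 : q.support.tail.Nodup := by
      rw [hqn, List.nodup_cons] at hqnd; exact hqnd.2
    refine ⟨h1, h2, ?_⟩
    intro z hz1 hz2
    have hz1' : z ∈ p.support := by rw [hpn]; exact List.mem_cons_of_mem _ hz1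
    have hz2' : z ∈ q.support := by rw [hqn]; exact List.mem_cons_of_mem _ hz2
    rcases hint z hz1' hz2' with rfl | rfl
    · exact hanp hz1
    · exact hbnq hz2

lemma split_cycle {H : SimpleGraph V} {a b : V} (c : H.Walk a a) (hc : c.IsCycle)
    (hb : b ∈ c.support) (hba : b ≠ a) :
    (c.takeUntil b hb).IsPath ∧ (c.dropUntil b hb).IsPath ∧
      ∀ z ∈ (c.takeUntil b hb).support, z ∈ (c.dropUntil b hb).support →
        z = a ∨ z = b := by
  have hspec : (c.takeUntil b hb).append (c.dropUntil b hb) = c := c.take_spec hb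
  set p := c.takeUntil b hb with hpdef
  set q := c.dropUntil b hb with hqdef
  have hsup : c.support = p.support ++ q.support.tail := by
    rw [← hspec, Walk.support_append]
  have hpc : p.support = a :: p.support.tail := p.support_eq_cons
  have hqc : q.support = b :: q.support.tail := q.support_eq_cons
  have hct : c.support.tail = p.support.tail ++ q.support.tail := by
    rw [hsup]
    conv_lhs => rw [hpc]
    rw [List.cons_append, List.tail_cons]
  have hnd : (p.support.tail ++ q.support.tail).Nodup := by
    rw [← hct]; exact ((Walk.isCycle_def c).1 hc).2.2
  rw [List.nodup_append'] at hnd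
  obtain ⟨hnd1, hnd2, hdisj⟩ := hnd
  have haq' : a ∈ q.support.tail := by
    have haq : a ∈ q.support := q.end_mem_support
    rw [hqc, List.mem_cons] at haq
    rcases haq with h | h
    · exact absurd h.symm hba
    · exact h
  have hanp : a ∉ p.support.tail := fun ha => hdisj ha haq'
  have hbp' : b ∈ p.support.tail := by
    have hbp : b ∈ p.support := p.end_mem_support
    rw [hpc, List.mem_cons] at hbp
    rcases hbp with h | h
    · exact absurd h hba
    · exact h
  have hbnq : b ∉ q.support.tail := fun hb' => hdisj hbp' hb'
  refine ⟨?_, ?_, ?_⟩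
  · rw [Walk.isPath_def, hpc, List.nodup_cons]; exact ⟨hanp, hnd1⟩
  · rw [Walk.isPath_def, hqc, List.nodup_cons]; exact ⟨hbnq, hnd2⟩
  · intro z hz1 hz2
    rw [hpc, List.mem_cons] at hz1
    rw [hqc, List.mem_cons] at hz2
    rcases hz1 with rfl | hz1'
    · exact Or.inl rfl
    rcases hz2 with rfl | hz2'
    · exact Or.inr rfl
    · exact absurd (hdisj hz1' hz2') not_false

lemma mem_support_tail_of_closed {H : SimpleGraph V} {a : V} (c : H.Walk a a)
    (hnil : c ≠ Walk.nil) {z : V} : z ∈ c.support ↔ z ∈ c.support.tail := by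
  cases c with
  | nil => exact absurd rfl hnil
  | cons h q =>
    rw [Walk.support_cons, List.tail_cons, List.mem_cons]
    constructor
    · rintro (rfl | hz)
      exacts [q.end_mem_support, hz]
    · exact Or.inr

lemma support_rotate_mem {H : SimpleGraph V} {a x : V} (c : H.Walk a a)
    (hc : c.IsCycle) (hx : x ∈ c.support) {z : V} :
    z ∈ (c.rotate x hx).support ↔ z ∈ c.support := by
  have hperm := c.support_rotate x hx
  have h1 : c ≠ Walk.nil := ((Walk.isCycle_def c).1 hc).2.1
  have h2 : c.rotate x hx ≠ Walk.nil := ((Walk.isCycle_def _).1 (hc.rotate hx)).2.1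
  rw [mem_support_tail_of_closed _ h1, mem_support_tail_of_closed _ h2, hperm.perm.mem_iff]


lemma crossSep (hU : A ∪ B = Set.univ)
    (hE : ∀ x ∈ A \ B, ∀ y ∈ B \ A, ¬G.Adj x y) {a b : V} (w : G.Walk a b) :
    a ∈ B → b ∈ A → ∃ z ∈ w.support, z ∈ A ∩ B := by
  induction w with
  | nil =>
    intro ha hb
    exact ⟨_, Walk.start_mem_support _, hb, ha⟩
  | @cons a c b h w ih =>
    intro ha hb
    by_cases haA : a ∈ A
    · exact ⟨a, Walk.start_mem_support _, haA, ha⟩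
    · by_cases hcB : c ∈ B
      · obtain ⟨z, hz, hzm⟩ := ih hcB hb
        exact ⟨z, by rw [Walk.support_cons]; exact List.mem_cons_of_mem _ hz, hzm⟩
      · have hcA : c ∈ A := by
          have : c ∈ A ∪ B := by rw [hU]; exact Set.mem_univ c
          rcases this with h' | h'
          · exact h'
          · exact absurd h' hcB
        exact absurd h.symm (hE c ⟨hcA, hcB⟩ a ⟨ha, haA⟩)

lemma sidesAux (hU : A ∪ B = Set.univ)
    (hE : ∀ x ∈ A \ B, ∀ y ∈ B \ A, ¬G.Adj x y) :
    ∀ {b t : V} (q : G.Walk b t), t ∈ A → t ∈ B → q.support.Nodup →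
      (∀ z ∈ q.support, z = t ∨ z ∈ A \ B ∨ z ∈ B \ A) →
      (∀ z ∈ q.support, z ∈ A) ∨ ∀ z ∈ q.support, z ∈ B := by
  intro b t q
  induction q with
  | nil =>
    intro htA htB _ _
    left
    intro z hz
    rw [Walk.support_nil, List.mem_singleton] at hz
    subst hz; exact htA
  | @cons b c t h q ih =>
    intro htA htB hnd hmem
    rw [Walk.support_cons, List.nodup_cons] at hnd
    have hmem' : ∀ z ∈ q.support, z = t ∨ z ∈ A \ B ∨ z ∈ B \ A := fun z hz =>
      hmem z (by rw [Walk.support_cons]; exact List.mem_cons_of_mem _ hz)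
    have hb := hmem b (Walk.start_mem_support _)
    rcases hb with rfl | hb | hb
    · exact absurd q.end_mem_support hnd.1
    · rcases ih htA htB hnd.2 hmem' with hA | hB
      · left
        intro z hz
        rw [Walk.support_cons, List.mem_cons] at hz
        rcases hz with rfl | hz
        exacts [hb.1, hA z hz]
      · rcases hmem' c q.start_mem_support with hct | hc | hc
        · subst hct
          have hq : q = Walk.nil := isPath_loop_eq_nil q (Walk.IsPath.mk' hnd.2)
          subst hq
          left
          intro z hz
          rw [Walk.support_cons, Walk.support_nil, List.mem_cons,
            List.mem_singleton] at hz
          rcases hz with rfl | rfl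
          · exact hb.1
          · exact htA
        · exact absurd (hB c q.start_mem_support) hc.2
        · exact absurd h (hE b hb c hc)
    · rcases ih htA htB hnd.2 hmem' with hA | hB
      · rcases hmem' c q.start_mem_support with hct | hc | hc
        · subst hct
          have hq : q = Walk.nil := isPath_loop_eq_nil q (Walk.IsPath.mk' hnd.2)
          subst hq
          right
          intro z hz
          rw [Walk.support_cons, Walk.support_nil, List.mem_cons,
            List.mem_singleton] at hz
          rcases hz with rfl | rfl
          · exact hb.1
          · exact htB
        · exact absurd h.symm (hE c hc b hb)
        · exact absurd (hA c q.start_mem_support) hc.2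
      · right
        intro z hz
        rw [Walk.support_cons, List.mem_cons] at hz
        rcases hz with rfl | hz
        exacts [hb.1, hB z hz]

lemma sides (hU : A ∪ B = Set.univ)
    (hE : ∀ x ∈ A \ B, ∀ y ∈ B \ A, ¬G.Adj x y) (hAB : A ∩ B = {u, v})
    {a b : V} (ha : a = u ∨ a = v) (hb : b = u ∨ b = v) (hab : a ≠ b)
    (p : G.Walk a b) (hp : p.IsPath) :
    (∀ z ∈ p.support, z ∈ A) ∨ ∀ z ∈ p.support, z ∈ B := by
  have haAB : a ∈ A ∩ B := by
    rcases ha with rfl | rfl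
    exacts [mem_sep_left hAB, mem_sep_right hAB]
  have hbAB : b ∈ A ∩ B := by
    rcases hb with rfl | rfl
    exacts [mem_sep_left hAB, mem_sep_right hAB]
  cases p with
  | nil => exact absurd rfl hab
  | @cons _ c _ h q =>
    have hq := (Walk.cons_isPath_iff _ _).1 hp
    have hmem : ∀ z ∈ q.support, z = b ∨ z ∈ A \ B ∨ z ∈ B \ A := by
      intro z hz
      by_cases hzA : z ∈ A
      · by_cases hzB : z ∈ B
        · have hz2 : z = u ∨ z = v := by
            have : z ∈ A ∩ B := ⟨hzA, hzB⟩
            rw [hAB] at this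
            simpa [Set.mem_insert_iff] using this
          have hza : z ≠ a := fun hzeq => hq.2 (hzeq ▸ hz)
          left
          have hz3 : z = a ∨ z = b := by
            rcases ha with rfl | rfl <;> rcases hb with rfl | rfl
            · exact absurd rfl hab
            · exact hz2
            · exact hz2.symm
            · exact absurd rfl hab
          rcases hz3 with rfl | rfl
          · exact absurd rfl hza
          · rfl
        · exact Or.inr (Or.inl ⟨hzA, hzB⟩)
      · have hzB : z ∈ B := by
          have : z ∈ A ∪ B := by rw [hU]; exact Set.mem_univ z
          rcases this with h' | h'
          · exact absurd h' hzA
          · exact h'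
        exact Or.inr (Or.inr ⟨hzB, hzA⟩)
    rcases sidesAux hU hE q hbAB.1 hbAB.2 hq.1.support_nodup hmem with hA | hB
    · left
      intro z hz
      rw [Walk.support_cons, List.mem_cons] at hz
      rcases hz with rfl | hz
      exacts [haAB.1, hA z hz]
    · right
      intro z hz
      rw [Walk.support_cons, List.mem_cons] at hz
      rcases hz with rfl | hz
      exacts [haAB.2, hB z hz]

lemma sep_mem_support (hU : A ∪ B = Set.univ)
    (hE : ∀ x ∈ A \ B, ∀ y ∈ B \ A, ¬G.Adj x y) {t t' : V}
    (hAB : A ∩ B = {t, t'}) {a : V} (c : G.Walk a a) (hc : c.IsCycle)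
    {x y : V} (hx : x ∈ c.support) (hxB : x ∈ B \ A)
    (hy : y ∈ c.support) (hyA : y ∈ A \ B) : t' ∈ c.support := by
  by_contra ht'
  have hc1 : (c.rotate x hx).IsCycle := hc.rotate hx
  have hy1 : y ∈ (c.rotate x hx).support := (support_rotate_mem c hc hx).2 hy
  have hyx : y ≠ x := fun h => hyA.2 (h ▸ hxB.1)
  obtain ⟨hp, hq, hint⟩ := split_cycle (c.rotate x hx) hc1 hy1 hyx
  have htm : t ∈ A ∩ B := by rw [hAB]; exact Set.mem_insert _ _
  have hz1 : t ∈ ((c.rotate x hx).takeUntil y hy1).support := by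
    obtain ⟨z, hz, hzm⟩ := crossSep hU hE ((c.rotate x hx).takeUntil y hy1) hxB.1 hyA.1
    have : z = t ∨ z = t' := by rw [hAB] at hzm; simpa [Set.mem_insert_iff] using hzm
    rcases this with rfl | rfl
    · exact hz
    · exact absurd ((support_rotate_mem c hc hx).1
        ((Walk.support_takeUntil_subset _ hy1) hz)) ht'
  have hz2 : t ∈ ((c.rotate x hx).dropUntil y hy1).support := by
    obtain ⟨z, hz, hzm⟩ :=
      crossSep hU hE ((c.rotate x hx).dropUntil y hy1).reverse hxB.1 hyA.1
    rw [Walk.support_reverse, List.mem_reverse] at hz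
    have : z = t ∨ z = t' := by rw [hAB] at hzm; simpa [Set.mem_insert_iff] using hzm
    rcases this with rfl | rfl
    · exact hz
    · exact absurd ((support_rotate_mem c hc hx).1
        ((Walk.support_dropUntil_subset _ hy1) hz)) ht'
  rcases hint t hz1 hz2 with rfl | rfl
  · exact hxB.2 htm.1
  · exact hyA.2 htm.2


lemma f_eq_on_A {a b : V} (w : G.Walk a b) (hw : ∀ z ∈ w.support, z ∈ A) :
    ∀ e ∈ w.edges, switchEdgeMap B A u v e = e := by
  intro e
  induction e using Sym2.ind with
  | _ x y =>
    intro he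
    exact switchEdgeMap_eq_self (hw _ (w.fst_mem_support_of_mem_edges he))
      (hw _ (w.snd_mem_support_of_mem_edges he))

lemma f_eq_on_B (hU : A ∪ B = Set.univ) (hAB : A ∩ B = {u, v}) {a b : V}
    (w : G.Walk a b) (hw : ∀ z ∈ w.support, z ∈ B) :
    ∀ e ∈ w.edges, switchEdgeMap B A u v e = Sym2.map (Equiv.swap u v) e := by
  intro e
  induction e using Sym2.ind with
  | _ x y =>
    intro he
    have hadj := w.edges_subset_edgeSet he
    rw [mem_edgeSet] at hadj
    exact switchEdgeMap_eq_map hU hAB (hw _ (w.fst_mem_support_of_mem_edges he))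
      (hw _ (w.snd_mem_support_of_mem_edges he)) hadj.ne

lemma fwd (hU : A ∪ B = Set.univ) (hne : u ≠ v) (hAB : A ∩ B = {u, v})
    (hE : ∀ x ∈ A \ B, ∀ y ∈ B \ A, ¬G.Adj x y) {s : Set (Sym2 V)}
    (hs : ∃ (a : V) (w : G.Walk a a), w.IsCycle ∧ s = {e | e ∈ w.edges}) :
    ∃ (a : V) (w : (wswitch G B u v).Walk a a), w.IsCycle ∧
      switchEdgeMap B A u v '' s = {e | e ∈ w.edges} := by
  obtain ⟨a, c, hc, rfl⟩ := hs
  by_cases hA : ∀ z ∈ c.support, z ∈ A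
  · refine ⟨a, c.transfer _ (edgesA hAB c hA), hc.transfer _, ?_⟩
    rw [Walk.edges_transfer]
    ext e
    simp only [Set.mem_image, Set.mem_setOf_eq]
    constructor
    · rintro ⟨e', he', rfl⟩
      rw [f_eq_on_A c hA e' he']
      exact he'
    · intro he
      exact ⟨e, he, f_eq_on_A c hA e he⟩
  · by_cases hB : ∀ z ∈ c.support, z ∈ B
    · refine ⟨Equiv.swap u v a, mapB hAB c hB, mapB_isCycle hAB c hB hc, ?_⟩
      rw [mapB_edges]
      ext e
      simp only [Set.mem_image, Set.mem_setOf_eq, List.mem_map]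
      constructor
      · rintro ⟨e', he', rfl⟩
        exact ⟨e', he', (f_eq_on_B hU hAB c hB e' he').symm⟩
      · rintro ⟨e', he', rfl⟩
        exact ⟨e', he', f_eq_on_B hU hAB c hB e' he'⟩
    · push_neg at hA hB
      obtain ⟨y, hy, hyA⟩ := hA
      obtain ⟨x, hx, hxB⟩ := hB
      have hyB : y ∈ B := by
        have : y ∈ A ∪ B := by rw [hU]; exact Set.mem_univ y
        rcases this with h' | h'
        · exact absurd h' hyA
        · exact h'
      have hxA : x ∈ A := by
        have : x ∈ A ∪ B := by rw [hU]; exact Set.mem_univ x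
        rcases this with h' | h'
        · exact h'
        · exact absurd h' hxB
      have hvs : v ∈ c.support :=
        sep_mem_support hU hE hAB c hc hy ⟨hyB, hyA⟩ hx ⟨hxA, hxB⟩
      have hus : u ∈ c.support :=
        sep_mem_support hU hE (by rw [hAB]; exact Set.pair_comm u v) c hc
          hy ⟨hyB, hyA⟩ hx ⟨hxA, hxB⟩
      have hc₂ : (c.rotate u hus).IsCycle := hc.rotate hus
      have hv2 : v ∈ (c.rotate u hus).support := (support_rotate_mem c hc hus).2 hvs
      obtain ⟨hpP, hqP, hint⟩ := split_cycle (c.rotate u hus) hc₂ hv2 (Ne.symm hne)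
      set p := (c.rotate u hus).takeUntil v hv2 with hpdef
      set q := (c.rotate u hus).dropUntil v hv2 with hqdef
      have hspec : p.append q = c.rotate u hus := (c.rotate u hus).take_spec hv2
      have hedge : ∀ e, e ∈ c.edges ↔ e ∈ p.edges ∨ e ∈ q.edges := by
        intro e
        rw [← (c.rotate_edges u hus).perm.mem_iff (a := e), ← hspec, Walk.edges_append,
          List.mem_append]
      have hlen : 3 ≤ p.length + q.length := by
        have h3 := hc₂.three_le_length
        have h4 : (c.rotate u hus).length = p.length + q.length := by
          rw [← hspec, Walk.length_append]
        omega
      have hyc2 : y ∈ (c.rotate u hus).support := (support_rotate_mem c hc hus).2 hy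
      have hxc2 : x ∈ (c.rotate u hus).support := (support_rotate_mem c hc hus).2 hx
      have hsupp2 : ∀ z ∈ (c.rotate u hus).support, z ∈ p.support ∨ z ∈ q.support := by
        intro z hz
        rw [← hspec, Walk.mem_support_append_iff] at hz
        exact hz
      rcases sides hU hE hAB (Or.inl rfl) (Or.inr rfl) hne p hpP with hpA | hpB <;>
        rcases sides hU hE hAB (Or.inr rfl) (Or.inl rfl) (Ne.symm hne) q hqP with
          hqA | hqB
      · rcases hsupp2 y hyc2 with h' | h'
        · exact absurd (hpA y h') hyA
        · exact absurd (hqA y h') hyA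
      · -- p ⊆ A, q ⊆ B
        set q1 : (wswitch G B u v).Walk u v :=
          (mapB hAB q hqB).copy (Equiv.swap_apply_right u v) (Equiv.swap_apply_left u v)
          with hq1def
        set p1 := p.transfer (wswitch G B u v) (edgesA hAB p hpA) with hp1def
        have hq1path : q1.IsPath := by
          rw [hq1def, Walk.isPath_copy]
          exact mapB_isPath hAB q hqB hqP
        have hq1supp : ∀ z ∈ q1.support, z ∈ B := by
          intro z hz
          rw [hq1def, Walk.support_copy, mapB_support] at hz
          obtain ⟨z0, hz0, rfl⟩ := List.mem_map.1 hz
          exact swap_mem_B hAB (hqB z0 hz0)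
        have hq1edges : q1.edges = q.edges.map (Sym2.map (Equiv.swap u v)) := by
          rw [hq1def, Walk.edges_copy, mapB_edges]
        have hcyc : (p1.append q1.reverse).IsCycle := by
          apply glue hne p1 q1.reverse (hpP.transfer _) hq1path.reverse
          · rw [Walk.length_reverse, hq1def, Walk.length_copy, mapB_length,
              hp1def, Walk.length_transfer]
            exact hlen
          · intro z hz1 hz2
            rw [hp1def, Walk.support_transfer] at hz1
            rw [Walk.support_reverse, List.mem_reverse] at hz2
            have hzm : z ∈ A ∩ B := ⟨hpA z hz1, hq1supp z hz2⟩
            rw [hAB] at hzm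
            simpa [Set.mem_insert_iff] using hzm
        refine ⟨u, p1.append q1.reverse, hcyc, ?_⟩
        ext e
        simp only [Set.mem_image, Set.mem_setOf_eq]
        rw [Walk.edges_append, List.mem_append, Walk.edges_reverse, List.mem_reverse,
          hq1edges, hp1def, Walk.edges_transfer]
        constructor
        · rintro ⟨e', he', rfl⟩
          rcases (hedge e').1 he' with h' | h'
          · left; rw [f_eq_on_A p hpA e' h']; exact h'
          · right; rw [f_eq_on_B hU hAB q hqB e' h']; exact List.mem_map_of_mem h'
        · rintro (h' | h')
          · exact ⟨e, (hedge e).2 (Or.inl h'), f_eq_on_A p hpA e h'⟩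
          · obtain ⟨e', he', rfl⟩ := List.mem_map.1 h'
            exact ⟨e', (hedge e').2 (Or.inr he'), f_eq_on_B hU hAB q hqB e' he'⟩
      · -- p ⊆ B, q ⊆ A
        set p2 : (wswitch G B u v).Walk v u :=
          (mapB hAB p hpB).copy (Equiv.swap_apply_left u v) (Equiv.swap_apply_right u v)
          with hp2def
        set q2 := q.transfer (wswitch G B u v) (edgesA hAB q hqA) with hq2def
        have hp2path : p2.IsPath := by
          rw [hp2def, Walk.isPath_copy]
          exact mapB_isPath hAB p hpB hpP
        have hp2supp : ∀ z ∈ p2.support, z ∈ B := by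
          intro z hz
          rw [hp2def, Walk.support_copy, mapB_support] at hz
          obtain ⟨z0, hz0, rfl⟩ := List.mem_map.1 hz
          exact swap_mem_B hAB (hpB z0 hz0)
        have hp2edges : p2.edges = p.edges.map (Sym2.map (Equiv.swap u v)) := by
          rw [hp2def, Walk.edges_copy, mapB_edges]
        have hcyc : (p2.append q2.reverse).IsCycle := by
          apply glue (Ne.symm hne) p2 q2.reverse hp2path (hqP.transfer _).reverse
          · rw [Walk.length_reverse, hp2def, Walk.length_copy, mapB_length,
              hq2def, Walk.length_transfer]
            exact hlen
          · intro z hz1 hz2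
            rw [Walk.support_reverse, List.mem_reverse, hq2def,
              Walk.support_transfer] at hz2
            have hzm : z ∈ A ∩ B := ⟨hqA z hz2, hp2supp z hz1⟩
            rw [hAB] at hzm
            have : z = u ∨ z = v := by simpa [Set.mem_insert_iff] using hzm
            exact this.symm
        refine ⟨v, p2.append q2.reverse, hcyc, ?_⟩
        ext e
        simp only [Set.mem_image, Set.mem_setOf_eq]
        rw [Walk.edges_append, List.mem_append, Walk.edges_reverse, List.mem_reverse,
          hp2edges, hq2def, Walk.edges_transfer]
        constructor
        · rintro ⟨e', he', rfl⟩
          rcases (hedge e').1 he' with h' | h'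
          · left; rw [f_eq_on_B hU hAB p hpB e' h']; exact List.mem_map_of_mem h'
          · right; rw [f_eq_on_A q hqA e' h']; exact h'
        · rintro (h' | h')
          · obtain ⟨e', he', rfl⟩ := List.mem_map.1 h'
            exact ⟨e', (hedge e').2 (Or.inl he'), f_eq_on_B hU hAB p hpB e' he'⟩
          · exact ⟨e, (hedge e).2 (Or.inr h'), f_eq_on_A q hqA e h'⟩
      · rcases hsupp2 x hxc2 with h' | h'
        · exact absurd (hpB x h') hxB
        · exact absurd (hqB x h') hxB

end Aux

/-- The identity map on the edges (interpreting each edge of `G[A]` and of `G[B]`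
as itself) is a 2-isomorphism from `G` to the Whitney switch `G'` of `G`: it is a
bijection of the edge sets, and a set of edges forms a cycle in `G` iff its image
forms a cycle in `G'`. -/
theorem stmt9 {V : Type*} [Fintype V] (G : SimpleGraph V)
    (A B : Set V) (u v : V)
    (hG : TwoConnected G) (hsep : WhitneySep G A B) (huv : A ∩ B = {u, v}) :
    Set.BijOn (switchEdgeMap B A u v) G.edgeSet (wswitch G B u v).edgeSet ∧
    ∀ s : Set (Sym2 V), s ⊆ G.edgeSet →
      (EdgeCycle G s ↔ EdgeCycle (wswitch G B u v) (switchEdgeMap B A u v '' s)) := by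
  obtain ⟨hU, -, -, ⟨u', v', hne', hset⟩, hE⟩ := hsep
  have hne : u ≠ v := by
    intro h
    rw [huv] at hset
    have h1 : u' = v := by
      have hm : u' ∈ ({u, v} : Set V) := by rw [hset]; exact Set.mem_insert _ _
      rw [h] at hm; simpa using hm
    have h2 : v' = v := by
      have hm : v' ∈ ({u, v} : Set V) := by
        rw [hset]; exact Set.mem_insert_iff.2 (Or.inr rfl)
      rw [h] at hm; simpa using hm
    exact hne' (h1.trans h2.symm)
  have hE' := wswitch_noedge huv hE
  constructor
  · refine ⟨fun e he => switchEdgeMap_mem huv he, ?_, ?_⟩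
    · intro e1 _ e2 _ h
      have h2 := congrArg (switchEdgeMap B A u v) h
      rwa [switchEdgeMap_invol huv, switchEdgeMap_invol huv] at h2
    · intro e he
      have h1 : switchEdgeMap B A u v e ∈ (wswitch (wswitch G B u v) B u v).edgeSet :=
        switchEdgeMap_mem huv he
      rw [wswitch_invol] at h1
      exact ⟨_, h1, switchEdgeMap_invol huv e⟩
  · intro s _
    constructor
    · intro h
      exact fwd hU hne huv hE h
    · intro h
      have h2 := fwd (G := wswitch G B u v) hU hne huv hE' h
      rw [wswitch_invol] at h2
      have h3 : switchEdgeMap B A u v '' (switchEdgeMap B A u v '' s) = s := by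
        rw [← Set.image_comp]
        have hcomp : switchEdgeMap B A u v ∘ switchEdgeMap B A u v = id := by
          funext e; exact switchEdgeMap_invol huv e
        rw [hcomp, Set.image_id]
      rwa [h3] at h2
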